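/- Let V : ℝ → ℝ be C¹ with |V(x)| ≤ C and |V'(x)| ≤ C(1+|x|)^δ for some δ ∈ (0,1). Let P_i^j = ∫_ℝ V h_i h_j dx with h_i the normalized Hermite functions. Then there is a constant C' such that for all i, j ≥ 1: |i-j|·|P_i^j| ≤ C'·(max(i,j))^{1/2}·(min(i,j))^{δ/2}. -/

import Mathlib

open MeasureTheory Real Filter

/-- The physicists' Hermite polynomials `H_n`. -/
noncomputable def physHermite : ℕ → ℝ → ℝ
  | 0 => fun _ => 1
  | 1 => fun x => 2 * x
  | (n+2) => fun x => 2 * x * physHermite (n+1) x - 2 * ((n:ℝ)+1) * physHermite n x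

/-- The `L²(ℝ)`-normalized Hermite functions `h_i`, `i ≥ 1`: the normalized
eigenfunctions of `-d²/dx² + x²` with eigenvalue `2i-1`, with the convention `h_0 = 0`. -/
noncomputable def hermiteFun (i : ℕ) (x : ℝ) : ℝ :=
  if i = 0 then 0
  else (Real.sqrt (2 ^ (i-1) * (Nat.factorial (i-1)) * Real.sqrt Real.pi))⁻¹ *
       physHermite (i-1) x * Real.exp (-x^2/2)

namespace Stmt16

lemma physHermite_zero (x : ℝ) : physHermite 0 x = 1 := rfl
lemma physHermite_one (x : ℝ) : physHermite 1 x = 2 * x := rfl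

lemma physHermite_succ (n : ℕ) (x : ℝ) :
    physHermite (n+1) x = 2 * x * physHermite n x - 2 * (n:ℝ) * physHermite (n-1) x := by
  match n with
  | 0 => simp [physHermite]
  | (m+1) =>
    show 2 * x * physHermite (m+1) x - 2*((m:ℝ)+1) * physHermite m x = _
    simp only [Nat.add_sub_cancel]
    push_cast
    ring

lemma hasDerivAt_physHermite (n : ℕ) (x : ℝ) :
    HasDerivAt (physHermite n) (2 * (n:ℝ) * physHermite (n-1) x) x := by
  induction n using Nat.strong_induction_on generalizing x with
  | _ n ih =>
    match n with
    | 0 => simpa [physHermite] using (hasDerivAt_const x (1:ℝ))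
    | 1 =>
      have : HasDerivAt (fun y : ℝ => 2 * y) 2 x := by
        simpa using (hasDerivAt_id x).const_mul (2:ℝ)
      simpa [physHermite] using this
    | (m+2) =>
      have h1 : ∀ y, HasDerivAt (physHermite (m+1)) (2 * ((m:ℝ)+1) * physHermite m y) y := by
        intro y; simpa using ih (m+1) (by omega) y
      have h0 : ∀ y, HasDerivAt (physHermite m) (2 * (m:ℝ) * physHermite (m-1) y) y := by
        intro y; simpa using ih m (by omega) y
      have h2 : HasDerivAt (fun y : ℝ => 2 * y) (2:ℝ) x := by
        simpa using ((hasDerivAt_id x).const_mul (2:ℝ))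
      have hx : HasDerivAt (fun y : ℝ => 2 * y * physHermite (m+1) y)
          (2 * physHermite (m+1) x + 2 * x * (2 * ((m:ℝ)+1) * physHermite m x)) x :=
        h2.mul (h1 x)
      have hy : HasDerivAt (fun y : ℝ => 2 * ((m:ℝ)+1) * physHermite m y)
          (2 * ((m:ℝ)+1) * (2 * (m:ℝ) * physHermite (m-1) x)) x := (h0 x).const_mul _
      have := hx.sub hy
      have heq : physHermite (m+2) = fun y =>
          2 * y * physHermite (m+1) y - 2 * ((m:ℝ)+1) * physHermite m y := by
        funext y; simp [physHermite]
      rw [heq]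
      refine this.congr_deriv ?_; symm
      have hrec := physHermite_succ m x
      show 2 * ((m + 2 : ℕ) : ℝ) * physHermite (m + 1) x = _
      push_cast
      push_cast at hrec
      linear_combination (2*((m:ℝ)+1)) * hrec

lemma physHermite_bound (n : ℕ) : ∃ B : ℝ, 0 ≤ B ∧ ∀ x, |physHermite n x| ≤ B * (1+x^2)^n := by
  induction n using Nat.strong_induction_on with
  | _ n ih =>
    match n with
    | 0 => exact ⟨1, by norm_num, fun x => by simp [physHermite]⟩
    | 1 =>
      refine ⟨2, by norm_num, fun x => ?_⟩
      have : |x| ≤ 1 + x^2 := by nlinarith [abs_nonneg x, sq_abs x]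
      rw [physHermite_one, abs_mul]
      simp only [pow_one]
      rw [abs_two]
      nlinarith [abs_nonneg x]
    | (m+2) =>
      obtain ⟨B1, hB1, h1⟩ := ih (m+1) (by omega)
      obtain ⟨B0, hB0, h0⟩ := ih m (by omega)
      refine ⟨2*B1 + 2*((m:ℝ)+1)*B0, by positivity, fun x => ?_⟩
      have hx : |x| ≤ 1 + x^2 := by nlinarith [abs_nonneg x, sq_abs x]
      have h1x : (1:ℝ) ≤ 1 + x^2 := by nlinarith
      have key : physHermite (m+2) x = 2*x*physHermite (m+1) x - 2*((m:ℝ)+1)*physHermite m x := by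
        simp [physHermite]
      rw [key]
      have e1 : |2*x*physHermite (m+1) x| ≤ 2*B1*(1+x^2)^(m+2) := by
        rw [abs_mul, abs_mul, abs_two]
        calc 2 * |x| * |physHermite (m+1) x| ≤ 2 * (1+x^2) * (B1 * (1+x^2)^(m+1)) := by
              apply mul_le_mul (by nlinarith) (h1 x) (abs_nonneg _) (by positivity)
          _ = 2*B1*(1+x^2)^(m+2) := by ring
      have e0 : |2*((m:ℝ)+1)*physHermite m x| ≤ 2*((m:ℝ)+1)*B0*(1+x^2)^(m+2) := by
        rw [abs_mul]
        have : |2*((m:ℝ)+1)| = 2*((m:ℝ)+1) := by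
          rw [abs_of_nonneg]; positivity
        rw [this]
        have hp : (1+x^2)^m ≤ (1+x^2)^(m+2) := by
          exact pow_le_pow_right₀ h1x (by omega)
        calc 2*((m:ℝ)+1) * |physHermite m x| ≤ 2*((m:ℝ)+1) * (B0 * (1+x^2)^m) := by
              apply mul_le_mul_of_nonneg_left (h0 x) (by positivity)
          _ ≤ 2*((m:ℝ)+1)*B0*(1+x^2)^(m+2) := by
              have h2 : B0 * (1+x^2)^m ≤ B0 * (1+x^2)^(m+2) := mul_le_mul_of_nonneg_left hp hB0
              nlinarith [(Nat.cast_nonneg m : (0:ℝ) ≤ m), pow_nonneg (by nlinarith : (0:ℝ) ≤ 1+x^2) m]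
      calc |2*x*physHermite (m+1) x - 2*((m:ℝ)+1)*physHermite m x|
          ≤ |2*x*physHermite (m+1) x| + |2*((m:ℝ)+1)*physHermite m x| := abs_sub _ _
        _ ≤ 2*B1*(1+x^2)^(m+2) + 2*((m:ℝ)+1)*B0*(1+x^2)^(m+2) := add_le_add e1 e0
        _ = (2*B1 + 2*((m:ℝ)+1)*B0) * (1+x^2)^(m+2) := by ring

lemma continuous_physHermite (n : ℕ) : Continuous (physHermite n) := by
  have : Differentiable ℝ (physHermite n) := fun x => (hasDerivAt_physHermite n x).differentiableAt
  exact this.continuous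


/-! ### The unnormalized Hermite functions ψ -/

noncomputable def ψ (n : ℕ) (x : ℝ) : ℝ := physHermite n x * Real.exp (-x^2/2)

lemma continuous_psi (n : ℕ) : Continuous (ψ n) := by
  exact (continuous_physHermite n).mul (by fun_prop)

lemma psi_rec (n : ℕ) (x : ℝ) :
    x * ψ n x = (1/2) * ψ (n+1) x + (n:ℝ) * ψ (n-1) x := by
  unfold ψ
  have h := physHermite_succ n x
  rw [h]; ring

noncomputable def Dψ (n : ℕ) (x : ℝ) : ℝ := (n:ℝ) * ψ (n-1) x - (1/2) * ψ (n+1) x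

lemma hasDerivAt_psi (n : ℕ) (x : ℝ) : HasDerivAt (ψ n) (Dψ n x) x := by
  have hg : HasDerivAt (fun y : ℝ => Real.exp (-y^2/2)) (-x * Real.exp (-x^2/2)) x := by
    have h1 : HasDerivAt (fun y : ℝ => -y^2/2) (-x) x := by
      have := ((hasDerivAt_pow 2 x).neg).div_const (2:ℝ)
      refine this.congr_deriv ?_; symm; ring
    refine h1.exp.congr_deriv ?_; symm; ring
  have := (hasDerivAt_physHermite n x).mul hg
  have heq : (fun y => physHermite n y * Real.exp (-y^2/2)) = ψ n := rfl
  replace this : HasDerivAt (ψ n) (2 * ↑n * physHermite (n - 1) x * rexp (-x ^ 2 / 2) + physHermite n x * (-x * rexp (-x ^ 2 / 2))) x := this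
  convert this using 1
  have hr := psi_rec n x
  unfold Dψ ψ at *
  nlinarith [hr]

lemma hasDerivAt_Dpsi (n : ℕ) (x : ℝ) :
    HasDerivAt (Dψ n) ((x^2 - (2*(n:ℝ)+1)) * ψ n x) x := by
  have h1 := (hasDerivAt_psi (n-1) x).const_mul (n:ℝ)
  have h2 := (hasDerivAt_psi (n+1) x).const_mul ((1:ℝ)/2)
  have hD : HasDerivAt (Dψ n) ((n:ℝ) * Dψ (n-1) x - (1/2) * Dψ (n+1) x) x := h1.sub h2
  convert hD using 1
  match n with
  | 0 =>
    have e0 := psi_rec 0 x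
    have e1 := psi_rec 1 x
    unfold Dψ at *
    norm_num at *
    linear_combination x * e0 + (1/2) * e1
  | (k+1) =>
    have e1 := psi_rec (k+1) x
    have e2 := psi_rec (k+2) x
    have e3 := psi_rec k x
    unfold Dψ at *
    simp only [Nat.add_sub_cancel] at *
    push_cast at *
    linear_combination x * e1 + (1/2) * e2 + ((k:ℝ)+1) * e3


/-! ### Integrability infrastructure -/

lemma one_add_sq_pow_le (k : ℕ) (x : ℝ) :
    (1+x^2)^k ≤ (2^k*(1 + 2^k * (Nat.factorial k))) * Real.exp (x^2/2) := by
  have hx2 : (0:ℝ) ≤ x^2/2 := by positivity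
  have haux2 : (x^2)^k ≤ 2^k * (Nat.factorial k) * Real.exp (x^2/2) := by
    have := Real.pow_div_factorial_le_exp (x := x^2/2) hx2 k
    have hfac : (0:ℝ) < (Nat.factorial k : ℝ) := by positivity
    rw [div_le_iff₀ hfac] at this
    calc (x^2)^k = 2^k * (x^2/2)^k := by rw [div_pow]; field_simp
      _ ≤ 2^k * (Real.exp (x^2/2) * (Nat.factorial k)) := by
          apply mul_le_mul_of_nonneg_left this (by positivity)
      _ = 2^k * (Nat.factorial k) * Real.exp (x^2/2) := by ring
  have haux1 : (1+x^2)^k ≤ 2^k * (1 + (x^2)^k) := by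
    rcases le_or_gt (x^2) 1 with h | h
    · calc (1+x^2)^k ≤ 2^k := by
            apply pow_le_pow_left₀ (by positivity) (by linarith)
        _ ≤ 2^k * (1 + (x^2)^k) := by nlinarith [pow_nonneg (sq_nonneg x) k, pow_pos (show (0:ℝ)<2 by norm_num) k]
    · calc (1+x^2)^k ≤ (2*x^2)^k := by
            apply pow_le_pow_left₀ (by positivity) (by linarith)
        _ = 2^k * (x^2)^k := by rw [mul_pow]
        _ ≤ 2^k * (1 + (x^2)^k) := by nlinarith [pow_pos (show (0:ℝ)<2 by norm_num) k, pow_nonneg (sq_nonneg x) k]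
  have hexp1 : (1:ℝ) ≤ Real.exp (x^2/2) := Real.one_le_exp hx2
  calc (1+x^2)^k ≤ 2^k * (1 + (x^2)^k) := haux1
    _ ≤ 2^k * (Real.exp (x^2/2) + 2^k * (Nat.factorial k) * Real.exp (x^2/2)) := by
        apply mul_le_mul_of_nonneg_left _ (by positivity)
        exact add_le_add hexp1 haux2
    _ = (2^k*(1 + 2^k * (Nat.factorial k))) * Real.exp (x^2/2) := by ring

lemma integrable_poly_gauss (k : ℕ) :
    Integrable (fun x : ℝ => (1+x^2)^k * Real.exp (-x^2)) := by
  set M : ℝ := 2^k*(1 + 2^k * (Nat.factorial k)) with hM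
  have hMpos : 0 < M := by positivity
  have hint : Integrable (fun x : ℝ => M * Real.exp (-((1:ℝ)/2) * x^2)) :=
    (integrable_exp_neg_mul_sq (by norm_num : (0:ℝ) < 1/2)).const_mul M
  apply hint.mono' (Continuous.aestronglyMeasurable (by continuity))
  filter_upwards with x
  rw [Real.norm_eq_abs, abs_of_nonneg (by positivity)]
  calc (1+x^2)^k * Real.exp (-x^2) ≤ (M * Real.exp (x^2/2)) * Real.exp (-x^2) := by
        apply mul_le_mul_of_nonneg_right (one_add_sq_pow_le k x) (Real.exp_nonneg _)
    _ = M * Real.exp (-((1:ℝ)/2) * x^2) := by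
        rw [mul_assoc, ← Real.exp_add]; ring_nf

lemma integrable_of_poly_gauss_bound {f : ℝ → ℝ} (hf : Continuous f) (k : ℕ) (A : ℝ)
    (hb : ∀ x, |f x| ≤ A * ((1+x^2)^k * Real.exp (-x^2))) : Integrable f := by
  apply ((integrable_poly_gauss k).const_mul A).mono' hf.aestronglyMeasurable
  filter_upwards with x
  rw [Real.norm_eq_abs]
  exact (hb x).trans_eq (by ring)

lemma psi_mul_psi (m n : ℕ) (x : ℝ) :
    ψ m x * ψ n x = physHermite m x * physHermite n x * Real.exp (-x^2) := by
  unfold ψ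
  rw [show physHermite m x * Real.exp (-x ^ 2 / 2) * (physHermite n x * Real.exp (-x ^ 2 / 2))
      = physHermite m x * physHermite n x * (Real.exp (-x ^ 2 / 2) * Real.exp (-x ^ 2 / 2)) by ring,
    ← Real.exp_add]
  ring_nf

lemma integrable_g_psi_psi {g : ℝ → ℝ} (hg : Continuous g) (k : ℕ) (A : ℝ)
    (hA : ∀ x, |g x| ≤ A * (1+x^2)^k) (m n : ℕ) :
    Integrable (fun x => g x * (ψ m x * ψ n x)) := by
  obtain ⟨Bm, hBm, hbm⟩ := physHermite_bound m
  obtain ⟨Bn, hBn, hbn⟩ := physHermite_bound n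
  have hA0 : 0 ≤ A := by
    have := (abs_nonneg (g 0)).trans (hA 0)
    norm_num at this
    exact this
  apply integrable_of_poly_gauss_bound
    (hg.mul ((continuous_psi m).mul (continuous_psi n))) (k+m+n) (A*Bm*Bn)
  intro x
  have h1x : (0:ℝ) < 1 + x^2 := by positivity
  have e : |g x * (physHermite m x * physHermite n x * Real.exp (-x^2))|
      = |g x| * |physHermite m x| * |physHermite n x| * Real.exp (-x^2) := by
    rw [abs_mul, abs_mul, abs_mul, Real.abs_exp]; ring
  show |g x * (ψ m x * ψ n x)| ≤ _; rw [psi_mul_psi, e]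
  calc |g x| * |physHermite m x| * |physHermite n x| * Real.exp (-x^2)
      ≤ (A*(1+x^2)^k) * (Bm*(1+x^2)^m) * (Bn*(1+x^2)^n) * Real.exp (-x^2) := by
        apply mul_le_mul_of_nonneg_right _ (Real.exp_nonneg _)
        apply mul_le_mul (mul_le_mul (hA x) (hbm x) (abs_nonneg _) (by positivity))
          (hbn x) (abs_nonneg _) (by positivity)
    _ = (A*Bm*Bn) * ((1+x^2)^(k+m+n) * Real.exp (-x^2)) := by
        rw [pow_add, pow_add]; ring

lemma integrable_psi_psi (m n : ℕ) : Integrable (fun x => ψ m x * ψ n x) := by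
  have := integrable_g_psi_psi (g := fun _ => (1:ℝ)) continuous_const 0 1
    (by intro x; simp) m n
  simpa using this

lemma integrable_x_psi_psi (m n : ℕ) : Integrable (fun x => x * (ψ m x * ψ n x)) := by
  apply integrable_g_psi_psi continuous_id 1 1
  intro x
  simp only [id_eq, one_mul, pow_one]
  nlinarith [abs_nonneg x, sq_abs x]

/-! ### Orthogonality and norms -/

lemma psi_orth {m n : ℕ} (h : m ≠ n) : ∫ x, ψ m x * ψ n x = 0 := by
  set W : ℝ → ℝ := fun x => Dψ m x * ψ n x - ψ m x * Dψ n x with hWdef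
  have hW : ∀ x, HasDerivAt W ((2*(n:ℝ) - 2*(m:ℝ)) * (ψ m x * ψ n x)) x := by
    intro x
    have h1 := (hasDerivAt_Dpsi m x).mul (hasDerivAt_psi n x)
    have h2 := (hasDerivAt_psi m x).mul (hasDerivAt_Dpsi n x)
    have := h1.sub h2
    refine this.congr_deriv ?_; symm
    ring
  have hWint : Integrable W := by
    have : W = fun x => ((m:ℝ) * (ψ (m-1) x * ψ n x) - (1/2) * (ψ (m+1) x * ψ n x))
        - ((n:ℝ) * (ψ m x * ψ (n-1) x) - (1/2) * (ψ m x * ψ (n+1) x)) := by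
      funext x; simp only [hWdef, Dψ]; ring
    rw [this]
    exact ((((integrable_psi_psi (m-1) n).const_mul _).sub
      ((integrable_psi_psi (m+1) n).const_mul _)).sub
      (((integrable_psi_psi m (n-1)).const_mul _).sub
      ((integrable_psi_psi m (n+1)).const_mul _)))
  have hW'int : Integrable (fun x => (2*(n:ℝ) - 2*(m:ℝ)) * (ψ m x * ψ n x)) :=
    (integrable_psi_psi m n).const_mul _
  have hzero := integral_eq_zero_of_hasDerivAt_of_integrable hW hW'int hWint
  rw [integral_const_mul] at hzero
  have hne : (2*(n:ℝ) - 2*(m:ℝ)) ≠ 0 := by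
    intro hcon
    apply h
    have : (m:ℝ) = (n:ℝ) := by linarith
    exact_mod_cast this
  exact (mul_eq_zero.mp hzero).resolve_left hne

lemma psi_succ (n : ℕ) (x : ℝ) :
    ψ (n+1) x = 2*x*ψ n x - 2*(n:ℝ)*ψ (n-1) x := by
  unfold ψ
  rw [physHermite_succ n x]; ring

lemma psi_norm (n : ℕ) : ∫ x, ψ n x * ψ n x = 2^n * (Nat.factorial n) * Real.sqrt π := by
  induction n with
  | zero =>
    have : ∀ x : ℝ, ψ 0 x * ψ 0 x = Real.exp (-(1:ℝ) * x^2) := by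
      intro x
      rw [psi_mul_psi]
      simp [physHermite]
    simp only [this]
    rw [integral_gaussian]
    norm_num
  | succ n ih =>
    have hsplit : ∀ x : ℝ, ψ (n+1) x * ψ (n+1) x
        = 2 * (x * (ψ (n+1) x * ψ n x)) - (2*(n:ℝ)) * (ψ (n+1) x * ψ (n-1) x) := by
      intro x
      nth_rewrite 2 [psi_succ n x]
      ring
    rw [show (fun x => ψ (n+1) x * ψ (n+1) x) = fun x =>
        2 * (x * (ψ (n+1) x * ψ n x)) - (2*(n:ℝ)) * (ψ (n+1) x * ψ (n-1) x) from funext hsplit]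
    have i1 : Integrable (fun x => x * (ψ (n+1) x * ψ n x)) := integrable_x_psi_psi _ _
    rw [integral_sub (i1.const_mul 2) ((integrable_psi_psi (n+1) (n-1)).const_mul _),
      integral_const_mul, integral_const_mul]
    have horth : (∫ x, ψ (n+1) x * ψ (n-1) x) = 0 := psi_orth (by omega)
    rw [horth, mul_zero, sub_zero]
    have hpt : ∀ x : ℝ, x * (ψ (n+1) x * ψ n x)
        = (1/2) * (ψ (n+2) x * ψ n x) + ((n:ℝ)+1) * (ψ n x * ψ n x) := by
      intro x
      have h := psi_rec (n+1) x
      simp only [Nat.add_sub_cancel] at h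
      push_cast at h
      linear_combination (ψ n x) * h
    rw [show (fun x => x * (ψ (n+1) x * ψ n x)) = fun x =>
        (1/2) * (ψ (n+2) x * ψ n x) + ((n:ℝ)+1) * (ψ n x * ψ n x) from funext hpt]
    rw [integral_add ((integrable_psi_psi (n+2) n).const_mul _)
      ((integrable_psi_psi n n).const_mul _), integral_const_mul, integral_const_mul,
      psi_orth (by omega : n+2 ≠ n), ih]
    push_cast [Nat.factorial_succ]
    ring


/-! ### Normalized Hermite functions -/

noncomputable def c (n : ℕ) : ℝ := (Real.sqrt (2^n * (Nat.factorial n) * Real.sqrt Real.pi))⁻¹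

noncomputable def η (n : ℕ) (x : ℝ) : ℝ := c n * ψ n x

noncomputable def ac (n : ℕ) : ℝ := Real.sqrt ((n:ℝ)/2)

lemma N_pos (n : ℕ) : (0:ℝ) < 2^n * (Nat.factorial n) * Real.sqrt Real.pi := by
  have : (0:ℝ) < Real.sqrt Real.pi := Real.sqrt_pos.mpr Real.pi_pos
  positivity

lemma c_pos (n : ℕ) : 0 < c n := by
  unfold c
  exact inv_pos.mpr (Real.sqrt_pos.mpr (N_pos n))

lemma ac_nonneg (n : ℕ) : 0 ≤ ac n := Real.sqrt_nonneg _

lemma hermiteFun_eq (n : ℕ) : hermiteFun (n+1) = η n := by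
  funext x
  unfold hermiteFun η c ψ
  simp only [Nat.add_eq_zero, and_false, if_false, Nat.add_sub_cancel]
  norm_num
  ring

lemma c_succ (n : ℕ) : c (n+1) = (Real.sqrt (2*((n:ℝ)+1)))⁻¹ * c n := by
  unfold c
  rw [show (2:ℝ)^(n+1) * (Nat.factorial (n+1)) * Real.sqrt Real.pi
      = (2*((n:ℝ)+1)) * (2^n * (Nat.factorial n) * Real.sqrt Real.pi) by
    push_cast [Nat.factorial_succ]; ring]
  rw [Real.sqrt_mul (by positivity), mul_inv]

lemma c_ratio1 (n : ℕ) : c n * (1/2) = ac (n+1) * c (n+1) := by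
  rw [c_succ]
  have key : ac (n+1) * (Real.sqrt (2*((n:ℝ)+1)))⁻¹ = 1/2 := by
    unfold ac
    push_cast
    rw [← Real.sqrt_inv, ← Real.sqrt_mul (by positivity)]
    rw [show ((n:ℝ)+1)/2 * (2*((n:ℝ)+1))⁻¹ = 1/4 by
      have h : ((n:ℝ)+1) ≠ 0 := by positivity
      field_simp; ring]
    rw [show (1:ℝ)/4 = (1/2)^2 by norm_num, Real.sqrt_sq (by norm_num)]
  calc c n * (1/2) = (ac (n+1) * (Real.sqrt (2*((n:ℝ)+1)))⁻¹) * c n := by rw [key]; ring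
    _ = ac (n+1) * ((Real.sqrt (2*((n:ℝ)+1)))⁻¹ * c n) := by ring

lemma c_ratio2 (n : ℕ) : (n:ℝ) * c n = ac n * c (n-1) := by
  match n with
  | 0 => simp [ac]
  | (k+1) =>
    rw [c_succ k]
    simp only [Nat.add_sub_cancel]
    rw [← mul_assoc]
    congr 1
    unfold ac
    push_cast
    rw [show ((k:ℝ)+1)/2 = ((k:ℝ)+1)^2 * (2*((k:ℝ)+1))⁻¹ by
      have : ((k:ℝ)+1) ≠ 0 := by positivity
      field_simp]
    rw [Real.sqrt_mul (sq_nonneg _), Real.sqrt_sq (by positivity), Real.sqrt_inv]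

lemma eta_rec (n : ℕ) (x : ℝ) :
    x * η n x = ac n * η (n-1) x + ac (n+1) * η (n+1) x := by
  unfold η
  have h1 := psi_rec n x
  have h2 := c_ratio1 n
  have h3 := c_ratio2 n
  linear_combination (c n) * h1 + (ψ (n+1) x) * h2 + (ψ (n-1) x) * h3

noncomputable def Dη (n : ℕ) (x : ℝ) : ℝ := ac n * η (n-1) x - ac (n+1) * η (n+1) x

lemma Deta_eq (n : ℕ) (x : ℝ) : Dη n x = c n * Dψ n x := by
  unfold Dη η Dψ
  have h2 := c_ratio1 n
  have h3 := c_ratio2 n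
  linear_combination (ψ (n+1) x) * h2 - (ψ (n-1) x) * h3

lemma hasDerivAt_eta (n : ℕ) (x : ℝ) : HasDerivAt (η n) (Dη n x) x := by
  have := (hasDerivAt_psi n x).const_mul (c n)
  rw [Deta_eq]
  exact this

lemma hasDerivAt_Deta (n : ℕ) (x : ℝ) :
    HasDerivAt (Dη n) ((x^2 - (2*(n:ℝ)+1)) * η n x) x := by
  have h : Dη n = fun y => c n * Dψ n y := funext (Deta_eq n)
  rw [h]
  have := (hasDerivAt_Dpsi n x).const_mul (c n)
  refine this.congr_deriv ?_; symm
  unfold η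
  ring

lemma eta_norm (n : ℕ) : ∫ x, η n x * η n x = 1 := by
  unfold η
  rw [show (fun x => c n * ψ n x * (c n * ψ n x)) = fun x => (c n * c n) * (ψ n x * ψ n x) by
    funext x; ring]
  rw [integral_const_mul, psi_norm]
  unfold c
  rw [← mul_inv, Real.mul_self_sqrt (le_of_lt (N_pos n))]
  exact inv_mul_cancel₀ (ne_of_gt (N_pos n))

lemma eta_orth {m n : ℕ} (h : m ≠ n) : ∫ x, η m x * η n x = 0 := by
  unfold η
  rw [show (fun x => c m * ψ m x * (c n * ψ n x)) = fun x => (c m * c n) * (ψ m x * ψ n x) by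
    funext x; ring]
  rw [integral_const_mul, psi_orth h, mul_zero]

lemma integrable_g_eta_eta {g : ℝ → ℝ} (hg : Continuous g) (k : ℕ) (A : ℝ)
    (hA : ∀ x, |g x| ≤ A * (1+x^2)^k) (m n : ℕ) :
    Integrable (fun x => g x * (η m x * η n x)) := by
  have : (fun x => g x * (η m x * η n x))
      = fun x => (c m * c n) * (g x * (ψ m x * ψ n x)) := by
    funext x; unfold η; ring
  rw [this]
  exact (integrable_g_psi_psi hg k A hA m n).const_mul _

lemma integrable_eta_eta (m n : ℕ) : Integrable (fun x => η m x * η n x) := by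
  have := integrable_g_eta_eta (g := fun _ => (1:ℝ)) continuous_const 0 1
    (by intro x; simp) m n
  simpa using this

lemma continuous_eta (n : ℕ) : Continuous (η n) := continuous_const.mul (continuous_psi n)


/-! ### Cauchy-Schwarz for integrals -/

lemma integral_cauchy_schwarz {f g : ℝ → ℝ}
    (hf2 : Integrable (fun x => f x ^ 2)) (hg2 : Integrable (fun x => g x ^ 2))
    (hfg : Integrable (fun x => f x * g x)) :
    (∫ x, f x * g x)^2 ≤ (∫ x, f x ^ 2) * (∫ x, g x ^ 2) := by
  have key : ∀ t : ℝ, 0 ≤ (∫ x, f x ^ 2) * (t*t) + (2 * ∫ x, f x * g x) * t + (∫ x, g x ^ 2) := by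
    intro t
    have h0 : 0 ≤ ∫ x, (t * f x + g x)^2 := integral_nonneg fun x => sq_nonneg _
    have hexp : (fun x => (t * f x + g x)^2)
        = fun x => (t*t) * (f x ^ 2) + ((2*t) * (f x * g x) + g x ^ 2) := by
      funext x; ring
    have hB : Integrable (fun x => (2*t) * (f x * g x) + g x ^ 2) :=
      (hfg.const_mul (2*t)).add hg2
    rw [hexp, integral_add (hf2.const_mul (t*t)) hB,
      integral_add (hfg.const_mul (2*t)) hg2, integral_const_mul, integral_const_mul] at h0
    nlinarith [h0]
  have hd := discrim_le_zero key
  rw [discrim] at hd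
  nlinarith [hd]

/-! ### Weighted bounds -/

lemma x2_eta (k : ℕ) : ∫ x, x^2 * (η k x * η k x) ≤ (k:ℝ) + 1 := by
  have hpt : ∀ x : ℝ, x^2 * (η k x * η k x)
      = (ac k * ac k) * (η (k-1) x * η (k-1) x)
        + ((ac (k+1) * ac (k+1)) * (η (k+1) x * η (k+1) x)
        + (2 * ac k * ac (k+1)) * (η (k-1) x * η (k+1) x)) := by
    intro x
    have h := eta_rec k x
    linear_combination (x * η k x + ac k * η (k-1) x + ac (k+1) * η (k+1) x) * h
  rw [show (fun x => x^2 * (η k x * η k x)) = fun x =>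
      (ac k * ac k) * (η (k-1) x * η (k-1) x)
        + ((ac (k+1) * ac (k+1)) * (η (k+1) x * η (k+1) x)
        + (2 * ac k * ac (k+1)) * (η (k-1) x * η (k+1) x)) from funext hpt]
  have hB : Integrable (fun x => (ac (k+1) * ac (k+1)) * (η (k+1) x * η (k+1) x)
      + (2 * ac k * ac (k+1)) * (η (k-1) x * η (k+1) x)) :=
    ((integrable_eta_eta (k+1) (k+1)).const_mul (ac (k+1) * ac (k+1))).add
      ((integrable_eta_eta (k-1) (k+1)).const_mul (2 * ac k * ac (k+1)))
  rw [integral_add ((integrable_eta_eta (k-1) (k-1)).const_mul (ac k * ac k)) hB,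
    integral_add ((integrable_eta_eta (k+1) (k+1)).const_mul (ac (k+1) * ac (k+1)))
      ((integrable_eta_eta (k-1) (k+1)).const_mul (2 * ac k * ac (k+1))),
    integral_const_mul, integral_const_mul, integral_const_mul,
    eta_norm, eta_norm, eta_orth (by omega : k-1 ≠ k+1), mul_zero]
  have h1 : ac k * ac k = (k:ℝ)/2 := Real.mul_self_sqrt (by positivity)
  have h2 : ac (k+1) * ac (k+1) = ((k:ℝ)+1)/2 := by
    have := Real.mul_self_sqrt (show (0:ℝ) ≤ ((k+1:ℕ):ℝ)/2 by positivity)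
    unfold ac
    rw [this]
    push_cast; ring
  rw [h1, h2]
  ring_nf
  linarith

lemma rpow_split {δ : ℝ} (hδ1 : 0 ≤ δ) (hδ2 : δ ≤ 1) {u S : ℝ} (hu : 1 ≤ u) (hS : 1 ≤ S) :
    u ^ δ ≤ S ^ δ + S ^ (δ-1) * u := by
  have hu0 : (0:ℝ) < u := by linarith
  have hS0 : (0:ℝ) < S := by linarith
  rcases le_or_gt u S with h | h
  · have h1 : u ^ δ ≤ S ^ δ := Real.rpow_le_rpow hu0.le h hδ1
    have h2 : 0 ≤ S ^ (δ-1) * u := by positivity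
    linarith
  · have h1 : u ^ δ = u ^ (δ-1) * u := by
      rw [← Real.rpow_add_one (ne_of_gt hu0)]
      ring_nf
    have h2 : u ^ (δ-1) ≤ S ^ (δ-1) := Real.rpow_le_rpow_of_nonpos hS0 h.le (by linarith)
    have h3 : u ^ (δ-1) * u ≤ S ^ (δ-1) * u := mul_le_mul_of_nonneg_right h2 hu0.le
    have h4 : 0 ≤ S ^ δ := (Real.rpow_pos_of_pos hS0 δ).le
    linarith

lemma weight_ptwise {δ : ℝ} (hδ1 : 0 ≤ δ) (x : ℝ) :
    ((1+|x|) ^ δ)^2 ≤ (2*(1+x^2)) ^ δ := by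
  have hb : (0:ℝ) < 1 + |x| := by positivity
  have e1 : ((1+|x|) ^ δ)^2 = ((1+|x|)^(2:ℕ)) ^ δ := by
    rw [← Real.rpow_natCast ((1+|x|) ^ δ) 2, ← Real.rpow_natCast (1+|x|) 2,
      ← Real.rpow_mul hb.le, ← Real.rpow_mul hb.le]
    ring_nf
  rw [e1]
  apply Real.rpow_le_rpow (by positivity) _ hδ1
  nlinarith [abs_nonneg x, sq_abs x, sq_nonneg (|x|-1)]

lemma weighted_eta {δ : ℝ} (hδ1 : 0 < δ) (hδ2 : δ ≤ 1) (k : ℕ) :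
    ∫ x, ((1+|x|) ^ δ)^2 * (η k x * η k x) ≤ 12 * ((k:ℝ)+1) ^ δ := by
  set S : ℝ := 2*((k:ℝ)+2) with hSdef
  have hS1 : (1:ℝ) ≤ S := by
    have : (0:ℝ) ≤ (k:ℝ) := Nat.cast_nonneg k
    simp only [hSdef]; nlinarith
  have hSpos : (0:ℝ) < S := lt_of_lt_of_le one_pos hS1
  have hη2 : ∀ x : ℝ, 0 ≤ η k x * η k x := fun x => mul_self_nonneg _
  have hcontw : Continuous (fun x : ℝ => ((1+|x|) ^ δ)^2) := by
    apply Continuous.pow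
    apply Continuous.rpow_const (continuous_const.add continuous_abs)
    intro x; right; exact hδ1.le
  have hwb : ∀ x : ℝ, ((1+|x|) ^ δ)^2 ≤ 2*(1+x^2) := by
    intro x
    have h1 := weight_ptwise hδ1.le x
    have hb1 : (1:ℝ) ≤ 2*(1+x^2) := by nlinarith [sq_nonneg x]
    have h2 : (2*(1+x^2)) ^ δ ≤ (2*(1+x^2)) ^ (1:ℝ) :=
      Real.rpow_le_rpow_of_exponent_le hb1 hδ2
    rw [Real.rpow_one] at h2
    linarith
  have iL : Integrable (fun x => ((1+|x|) ^ δ)^2 * (η k x * η k x)) := by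
    apply integrable_g_eta_eta hcontw 1 2 _ k k
    intro x
    rw [abs_of_nonneg (by positivity)]
    simpa using hwb x
  have iR1 : Integrable (fun x => η k x * η k x) := integrable_eta_eta k k
  have iR2 : Integrable (fun x => (1+x^2) * (η k x * η k x)) := by
    apply integrable_g_eta_eta (by continuity) 1 1 _ k k
    intro x
    rw [abs_of_nonneg (by positivity)]
    simp
  have ix2 : Integrable (fun x => x^2 * (η k x * η k x)) := by
    apply integrable_g_eta_eta (by continuity) 1 1 _ k k
    intro x
    rw [abs_of_nonneg (sq_nonneg x)]
    nlinarith [sq_nonneg x]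
  have hpt : ∀ x : ℝ, ((1+|x|) ^ δ)^2 * (η k x * η k x)
      ≤ S ^ δ * (η k x * η k x) + (2*S^(δ-1)) * ((1+x^2) * (η k x * η k x)) := by
    intro x
    have h1 : ((1+|x|) ^ δ)^2 ≤ (2*(1+x^2)) ^ δ := weight_ptwise hδ1.le x
    have h2 : (2*(1+x^2)) ^ δ ≤ S^δ + S^(δ-1)*(2*(1+x^2)) :=
      rpow_split hδ1.le hδ2 (by nlinarith [sq_nonneg x]) hS1
    have h3 := mul_le_mul_of_nonneg_right (h1.trans h2) (hη2 x)
    calc ((1+|x|) ^ δ)^2 * (η k x * η k x)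
        ≤ (S^δ + S^(δ-1)*(2*(1+x^2))) * (η k x * η k x) := h3
      _ = S ^ δ * (η k x * η k x) + (2*S^(δ-1)) * ((1+x^2) * (η k x * η k x)) := by ring
  have hInt := integral_mono iL ((iR1.const_mul (S^δ)).add (iR2.const_mul (2*S^(δ-1)))) hpt
  have hval : ∫ x, (S ^ δ * (η k x * η k x) + (2*S^(δ-1)) * ((1+x^2) * (η k x * η k x)))
      = S^δ + (2*S^(δ-1)) * ∫ x, (1+x^2) * (η k x * η k x) := by
    have hB : Integrable (fun x => (2*S^(δ-1)) * ((1+x^2) * (η k x * η k x))) :=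
      iR2.const_mul _
    rw [integral_add (iR1.const_mul (S^δ)) hB, integral_const_mul, integral_const_mul, eta_norm,
      mul_one]
  have hI2 : ∫ x, (1+x^2) * (η k x * η k x) ≤ (k:ℝ) + 2 := by
    have he : (fun x => (1+x^2) * (η k x * η k x))
        = fun x => (η k x * η k x) + x^2 * (η k x * η k x) := by funext x; ring
    rw [he, integral_add iR1 ix2, eta_norm]
    linarith [x2_eta k]
  have hI2' : 0 ≤ ∫ x, (1+x^2) * (η k x * η k x) :=
    integral_nonneg fun x => mul_nonneg (by nlinarith [sq_nonneg x]) (hη2 x)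
  have hstep : ∫ x, ((1+|x|) ^ δ)^2 * (η k x * η k x) ≤ 2 * S^δ := by
    have hSd1 : (0:ℝ) ≤ S^(δ-1) := (Real.rpow_pos_of_pos hSpos _).le
    have h4 : (2*S^(δ-1)) * (∫ x, (1+x^2) * (η k x * η k x)) ≤ (2*S^(δ-1)) * ((k:ℝ)+2) :=
      mul_le_mul_of_nonneg_left hI2 (by positivity)
    have h5 : (2*S^(δ-1)) * ((k:ℝ)+2) = S^(δ-1) * S := by
      simp only [hSdef]; ring
    have h6 : S^(δ-1) * S = S^δ := by
      rw [show S^(δ-1) * S = S^(δ-1) * S^(1:ℝ) by rw [Real.rpow_one],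
        ← Real.rpow_add hSpos]
      ring_nf
    calc ∫ x, ((1+|x|) ^ δ)^2 * (η k x * η k x)
        ≤ S^δ + (2*S^(δ-1)) * ∫ x, (1+x^2) * (η k x * η k x) := by rw [← hval]; exact hInt
      _ ≤ S^δ + S^δ := by rw [← h6, ← h5]; linarith [h4]
      _ = 2 * S^δ := by ring
  have hfin : 2 * S^δ ≤ 12 * ((k:ℝ)+1)^δ := by
    have hk1 : (0:ℝ) ≤ (k:ℝ)+1 := by positivity
    have hb : S ≤ 6 * ((k:ℝ)+1) := by
      simp only [hSdef]; nlinarith [(Nat.cast_nonneg k : (0:ℝ) ≤ (k:ℝ))]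
    have h7 : S^δ ≤ (6*((k:ℝ)+1))^δ := Real.rpow_le_rpow hSpos.le hb hδ1.le
    have h8 : (6*((k:ℝ)+1))^δ = 6^δ * ((k:ℝ)+1)^δ := Real.mul_rpow (by norm_num) hk1
    have h9 : (6:ℝ)^δ ≤ 6 := by
      have := Real.rpow_le_rpow_of_exponent_le (show (1:ℝ) ≤ 6 by norm_num) hδ2
      rwa [Real.rpow_one] at this
    have h10 : (0:ℝ) ≤ ((k:ℝ)+1)^δ := (Real.rpow_pos_of_pos (by positivity) _).le
    nlinarith [h7, h8, h9, h10]
  linarith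


/-! ### The Cauchy-Schwarz estimate for the potential matrix elements -/

lemma cs_estimate {δ : ℝ} (hδ1 : 0 < δ) (hδ2 : δ ≤ 1) {C : ℝ} (hC : 0 ≤ C)
    {V' : ℝ → ℝ} (hV'c : Continuous V') (hV'b : ∀ x, |V' x| ≤ C * (1+|x|) ^ δ) (a b : ℕ) :
    |∫ x, V' x * (η a x * η b x)| ≤ 4*C*((a:ℝ)+1)^(δ/2) := by
  have hwnn : ∀ x : ℝ, (0:ℝ) ≤ (1+|x|) ^ δ := fun x => (Real.rpow_pos_of_pos (by positivity) _).le
  have hwb : ∀ x : ℝ, (1+|x|) ^ δ ≤ 2*(1+x^2) := by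
    intro x
    have h1 : (1+|x|) ^ δ ≤ (1+|x|) ^ (1:ℝ) :=
      Real.rpow_le_rpow_of_exponent_le (by simp [abs_nonneg]) hδ2
    rw [Real.rpow_one] at h1
    nlinarith [abs_nonneg x, sq_abs x, sq_nonneg (|x|-1)]
  have hcontw : Continuous (fun x : ℝ => (1+|x|) ^ δ) := by
    apply Continuous.rpow_const (continuous_const.add continuous_abs)
    intro x; right; exact hδ1.le
  have hcontw2 : Continuous (fun x : ℝ => ((1+|x|) ^ δ)^2) := hcontw.pow 2
  have hwb2 : ∀ x : ℝ, ((1+|x|) ^ δ)^2 ≤ 2*(1+x^2) := by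
    intro x
    have h1 := weight_ptwise hδ1.le x
    have hb1 : (1:ℝ) ≤ 2*(1+x^2) := by nlinarith [sq_nonneg x]
    have h2 : (2*(1+x^2)) ^ δ ≤ (2*(1+x^2)) ^ (1:ℝ) :=
      Real.rpow_le_rpow_of_exponent_le hb1 hδ2
    rw [Real.rpow_one] at h2
    linarith
  set f : ℝ → ℝ := fun x => (1+|x|) ^ δ * |η a x| with hfdef
  set g : ℝ → ℝ := fun x => |η b x| with hgdef
  have hV'poly : ∀ x, |V' x| ≤ (2*C) * (1+x^2)^1 := by
    intro x
    calc |V' x| ≤ C * (1+|x|) ^ δ := hV'b x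
      _ ≤ C * (2*(1+x^2)) := mul_le_mul_of_nonneg_left (hwb x) hC
      _ = (2*C) * (1+x^2)^1 := by ring
  have iV' : Integrable (fun x => V' x * (η a x * η b x)) :=
    integrable_g_eta_eta hV'c 1 (2*C) hV'poly a b
  have iwab : Integrable (fun x => (1+|x|) ^ δ * (η a x * η b x)) := by
    apply integrable_g_eta_eta hcontw 1 2 _ a b
    intro x
    rw [abs_of_nonneg (hwnn x)]
    simpa using hwb x
  have ifg : Integrable (fun x => f x * g x) := by
    have := iwab.abs
    apply this.congr
    filter_upwards with x
    simp only [hfdef, hgdef, abs_mul, abs_of_nonneg (hwnn x)]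
    ring
  have if2 : Integrable (fun x => f x ^ 2) := by
    have heq : (fun x => f x ^ 2) = fun x => ((1+|x|) ^ δ)^2 * (η a x * η a x) := by
      funext x
      simp only [hfdef]
      rw [mul_pow, sq_abs]
      ring
    rw [heq]
    apply integrable_g_eta_eta hcontw2 1 2 _ a a
    intro x
    rw [abs_of_nonneg (by positivity)]
    simpa using hwb2 x
  have ig2 : Integrable (fun x => g x ^ 2) := by
    have heq : (fun x => g x ^ 2) = fun x => η b x * η b x := by
      funext x; simp only [hgdef]; rw [sq_abs]; ring
    rw [heq]
    exact integrable_eta_eta b b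
  have hg2val : ∫ x, g x ^ 2 = 1 := by
    have heq : (fun x => g x ^ 2) = fun x => η b x * η b x := by
      funext x; simp only [hgdef]; rw [sq_abs]; ring
    rw [heq]; exact eta_norm b
  have hf2val : ∫ x, f x ^ 2 ≤ 12 * ((a:ℝ)+1) ^ δ := by
    have heq : (fun x => f x ^ 2) = fun x => ((1+|x|) ^ δ)^2 * (η a x * η a x) := by
      funext x
      simp only [hfdef]
      rw [mul_pow, sq_abs]
      ring
    rw [heq]
    exact weighted_eta hδ1 hδ2 a
  have hcs := integral_cauchy_schwarz if2 ig2 ifg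
  have hfgnn : 0 ≤ ∫ x, f x * g x :=
    integral_nonneg fun x => mul_nonneg (mul_nonneg (hwnn x) (abs_nonneg _)) (abs_nonneg _)
  set R : ℝ := ((a:ℝ)+1) ^ (δ/2) with hRdef
  have hRpos : 0 < R := Real.rpow_pos_of_pos (by positivity) _
  have hR2 : R^2 = ((a:ℝ)+1) ^ δ := by
    rw [hRdef, ← Real.rpow_natCast (((a:ℝ)+1) ^ (δ/2)) 2, ← Real.rpow_mul (by positivity)]
    norm_num
  have hf2nn : 0 ≤ ∫ x, f x ^ 2 := integral_nonneg fun x => sq_nonneg _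
  have hfg_le : ∫ x, f x * g x ≤ 4 * R := by
    have h1 : (∫ x, f x * g x)^2 ≤ (4*R)^2 := by
      calc (∫ x, f x * g x)^2 ≤ (∫ x, f x ^ 2) * (∫ x, g x ^ 2) := hcs
        _ = ∫ x, f x ^ 2 := by rw [hg2val, mul_one]
        _ ≤ 12 * ((a:ℝ)+1) ^ δ := hf2val
        _ ≤ 16 * R^2 := by rw [hR2]; nlinarith [hR2, sq_nonneg R, Real.rpow_pos_of_pos (show (0:ℝ) < (a:ℝ)+1 by positivity) δ]
        _ = (4*R)^2 := by ring
    have h2 : 0 ≤ 4*R := by positivity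
    nlinarith [h1, hfgnn, h2]
  have hmono : ∫ x, |V' x * (η a x * η b x)| ≤ ∫ x, C * (f x * g x) := by
    apply integral_mono iV'.abs (ifg.const_mul C)
    intro x
    simp only [hfdef, hgdef, abs_mul]
    calc |V' x| * (|η a x| * |η b x|) ≤ (C * (1+|x|) ^ δ) * (|η a x| * |η b x|) := by
          apply mul_le_mul_of_nonneg_right (hV'b x) (by positivity)
      _ = C * ((1+|x|) ^ δ * |η a x| * |η b x|) := by ring
  calc |∫ x, V' x * (η a x * η b x)| ≤ ∫ x, |V' x * (η a x * η b x)| := by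
        have := norm_integral_le_integral_norm (μ := volume) (fun x => V' x * (η a x * η b x))
        simpa only [Real.norm_eq_abs] using this
    _ ≤ ∫ x, C * (f x * g x) := hmono
    _ = C * ∫ x, f x * g x := integral_const_mul _ _
    _ ≤ C * (4*R) := mul_le_mul_of_nonneg_left hfg_le hC
    _ = 4*C*R := by ring


/-! ### The commutator identity -/

lemma commutator {V V' : ℝ → ℝ} (hVd : ∀ x, HasDerivAt V (V' x) x)
    (hVc : Continuous V) (hV'c : Continuous V') {C : ℝ} (hC : 0 ≤ C)
    (hVb : ∀ x, |V x| ≤ C) (hV'g : ∀ x, |V' x| ≤ (2*C) * (1+x^2)^1) (m n : ℕ) :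
    2*((m:ℝ)-(n:ℝ)) * ∫ x, V x * (η m x * η n x)
      = ∫ x, V' x * (Dη m x * η n x - η m x * Dη n x) := by
  set G : ℝ → ℝ := fun x => Dη m x * η n x - η m x * Dη n x with hGdef
  have key : ∀ (g : ℝ → ℝ), Continuous g → ∀ (k : ℕ) (A : ℝ), (∀ x, |g x| ≤ A * (1+x^2)^k) →
      Integrable (fun x => g x * G x) := by
    intro g hg k A hA
    have heq : (fun x => g x * G x) = fun x =>
        ac m * (g x * (η (m-1) x * η n x)) - ac (m+1) * (g x * (η (m+1) x * η n x))
          - (ac n * (g x * (η m x * η (n-1) x)) - ac (n+1) * (g x * (η m x * η (n+1) x))) := by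
      funext x
      simp only [hGdef, Dη]
      ring
    rw [heq]
    exact (((integrable_g_eta_eta hg k A hA (m-1) n).const_mul _).sub
        ((integrable_g_eta_eta hg k A hA (m+1) n).const_mul _)).sub
      (((integrable_g_eta_eta hg k A hA m (n-1)).const_mul _).sub
        ((integrable_g_eta_eta hg k A hA m (n+1)).const_mul _))
  have hW : ∀ x, HasDerivAt (fun y => V y * G y)
      (V' x * G x + V x * ((2*(n:ℝ)-2*(m:ℝ)) * (η m x * η n x))) x := by
    intro x
    have hG : HasDerivAt G ((2*(n:ℝ)-2*(m:ℝ)) * (η m x * η n x)) x := by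
      have h1 := (hasDerivAt_Deta m x).mul (hasDerivAt_eta n x)
      have h2 := (hasDerivAt_eta m x).mul (hasDerivAt_Deta n x)
      have h3 := h1.sub h2
      refine h3.congr_deriv ?_; symm
      ring
    exact (hVd x).mul hG
  have hWint : Integrable (fun x => V x * G x) := by
    apply key V hVc 0 C
    intro x; simpa using hVb x
  have h1int : Integrable (fun x => V' x * G x) := key V' hV'c 1 (2*C) hV'g
  have h2int : Integrable (fun x => V x * ((2*(n:ℝ)-2*(m:ℝ)) * (η m x * η n x))) := by
    have heq : (fun x => V x * ((2*(n:ℝ)-2*(m:ℝ)) * (η m x * η n x)))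
        = fun x => (2*(n:ℝ)-2*(m:ℝ)) * (V x * (η m x * η n x)) := by
      funext x; ring
    rw [heq]
    exact (integrable_g_eta_eta hVc 0 C (fun x => by simpa using hVb x) m n).const_mul _
  have hzero := integral_eq_zero_of_hasDerivAt_of_integrable hW (h1int.add h2int) hWint
  rw [integral_add h1int h2int] at hzero
  have h2val : ∫ x, V x * ((2*(n:ℝ)-2*(m:ℝ)) * (η m x * η n x))
      = (2*(n:ℝ)-2*(m:ℝ)) * ∫ x, V x * (η m x * η n x) := by
    have heq : (fun x => V x * ((2*(n:ℝ)-2*(m:ℝ)) * (η m x * η n x)))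
        = fun x => (2*(n:ℝ)-2*(m:ℝ)) * (V x * (η m x * η n x)) := by
      funext x; ring
    rw [heq, integral_const_mul]
  rw [h2val] at hzero
  linarith [hzero]


/-! ### Main estimate (ordered indices) -/

lemma main_est {δ C : ℝ} (hδ : δ ∈ Set.Ioo (0:ℝ) 1) (hC : 0 < C)
    {V : ℝ → ℝ} (hV : ContDiff ℝ 1 V)
    (hVb : ∀ x, |V x| ≤ C) (hV'b : ∀ x, |deriv V x| ≤ C * (1+|x|) ^ δ)
    {m n : ℕ} (hmn : m ≤ n) :
    |(m:ℝ) - (n:ℝ)| * |∫ x, V x * (η m x * η n x)|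
      ≤ 20*C * ((n:ℝ)+1)^((1:ℝ)/2) * ((m:ℝ)+1)^(δ/2) := by
  obtain ⟨hδ1, hδ2⟩ := hδ
  have hδ2' : δ ≤ 1 := le_of_lt hδ2
  have hVd : ∀ x, HasDerivAt V (deriv V x) x := fun x => (hV.differentiable one_ne_zero x).hasDerivAt
  have hVc : Continuous V := hV.continuous
  have hV'c : Continuous (deriv V) := hV.continuous_deriv le_rfl
  have hwb : ∀ x : ℝ, (1+|x|) ^ δ ≤ 2*(1+x^2) := by
    intro x
    have h1 : (1+|x|) ^ δ ≤ (1+|x|) ^ (1:ℝ) :=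
      Real.rpow_le_rpow_of_exponent_le (by simp [abs_nonneg]) hδ2'
    rw [Real.rpow_one] at h1
    nlinarith [abs_nonneg x, sq_abs x, sq_nonneg (|x|-1)]
  have hV'g : ∀ x, |deriv V x| ≤ (2*C) * (1+x^2)^1 := by
    intro x
    calc |deriv V x| ≤ C * (1+|x|) ^ δ := hV'b x
      _ ≤ C * (2*(1+x^2)) := mul_le_mul_of_nonneg_left (hwb x) hC.le
      _ = (2*C) * (1+x^2)^1 := by ring
  have hcomm := commutator hVd hVc hV'c hC.le hVb hV'g m n
  set I1 := ∫ x, deriv V x * (η (m-1) x * η n x) with hI1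
  set I2 := ∫ x, deriv V x * (η (m+1) x * η n x) with hI2
  set I3 := ∫ x, deriv V x * (η m x * η (n-1) x) with hI3
  set I4 := ∫ x, deriv V x * (η m x * η (n+1) x) with hI4
  have J : ∀ a b : ℕ, Integrable (fun x => deriv V x * (η a x * η b x)) :=
    fun a b => integrable_g_eta_eta hV'c 1 (2*C) hV'g a b
  have hsplit : ∫ x, deriv V x * (Dη m x * η n x - η m x * Dη n x)
      = ac m * I1 - ac (m+1) * I2 - (ac n * I3 - ac (n+1) * I4) := by
    have heq : (fun x => deriv V x * (Dη m x * η n x - η m x * Dη n x)) = fun x =>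
        ac m * (deriv V x * (η (m-1) x * η n x)) - ac (m+1) * (deriv V x * (η (m+1) x * η n x))
          - (ac n * (deriv V x * (η m x * η (n-1) x))
            - ac (n+1) * (deriv V x * (η m x * η (n+1) x))) := by
      funext x
      simp only [Dη]
      ring
    have A1 : Integrable (fun x => ac m * (deriv V x * (η (m-1) x * η n x))) :=
      (J (m-1) n).const_mul _
    have A2 : Integrable (fun x => ac (m+1) * (deriv V x * (η (m+1) x * η n x))) :=
      (J (m+1) n).const_mul _
    have A3 : Integrable (fun x => ac n * (deriv V x * (η m x * η (n-1) x))) :=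
      (J m (n-1)).const_mul _
    have A4 : Integrable (fun x => ac (n+1) * (deriv V x * (η m x * η (n+1) x))) :=
      (J m (n+1)).const_mul _
    have A12 : Integrable (fun x => ac m * (deriv V x * (η (m-1) x * η n x))
        - ac (m+1) * (deriv V x * (η (m+1) x * η n x))) := A1.sub A2
    have A34 : Integrable (fun x => ac n * (deriv V x * (η m x * η (n-1) x))
        - ac (n+1) * (deriv V x * (η m x * η (n+1) x))) := A3.sub A4
    rw [heq, integral_sub A12 A34, integral_sub A1 A2, integral_sub A3 A4,
      integral_const_mul, integral_const_mul, integral_const_mul, integral_const_mul]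
  -- bounds on each integral
  have hb1 : |I1| ≤ 4*C*((m:ℝ)+1)^(δ/2) := by
    have h := cs_estimate hδ1 hδ2' hC.le hV'c hV'b (m-1) n
    rw [← hI1] at h
    refine h.trans ?_
    apply mul_le_mul_of_nonneg_left _ (by positivity)
    apply Real.rpow_le_rpow (by positivity) _ (by positivity)
    have : ((m-1:ℕ):ℝ) ≤ (m:ℝ) := Nat.cast_le.mpr (Nat.sub_le m 1)
    linarith
  have hb2 : |I2| ≤ 8*C*((m:ℝ)+1)^(δ/2) := by
    have h := cs_estimate hδ1 hδ2' hC.le hV'c hV'b (m+1) n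
    rw [← hI2] at h
    refine h.trans ?_
    have hbase : (((m+1:ℕ)):ℝ)+1 ≤ 2*((m:ℝ)+1) := by push_cast; linarith [Nat.cast_nonneg (α := ℝ) m]
    have h2 : ((((m+1:ℕ)):ℝ)+1)^(δ/2) ≤ (2*((m:ℝ)+1))^(δ/2) :=
      Real.rpow_le_rpow (by positivity) hbase (by positivity)
    have h3 : (2*((m:ℝ)+1))^(δ/2) = 2^(δ/2) * ((m:ℝ)+1)^(δ/2) :=
      Real.mul_rpow (by norm_num) (by positivity)
    have h4 : (2:ℝ)^(δ/2) ≤ 2 := by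
      have := Real.rpow_le_rpow_of_exponent_le (show (1:ℝ) ≤ 2 by norm_num)
        (show δ/2 ≤ (1:ℝ) by linarith)
      rwa [Real.rpow_one] at this
    have h5 : (0:ℝ) ≤ ((m:ℝ)+1)^(δ/2) := by positivity
    calc 4*C*(((m+1:ℕ):ℝ)+1)^(δ/2) ≤ 4*C*(2^(δ/2) * ((m:ℝ)+1)^(δ/2)) := by
          rw [← h3]
          exact mul_le_mul_of_nonneg_left h2 (by positivity)
      _ ≤ 8*C*((m:ℝ)+1)^(δ/2) := by
          have h6 : 0 ≤ C * (((m:ℝ)+1)^(δ/2)) * (2 - 2^(δ/2)) :=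
            mul_nonneg (mul_nonneg hC.le h5) (by linarith)
          nlinarith [h6]
  have hb3 : |I3| ≤ 4*C*((m:ℝ)+1)^(δ/2) := by
    have h := cs_estimate hδ1 hδ2' hC.le hV'c hV'b m (n-1)
    rw [← hI3] at h
    exact h
  have hb4 : |I4| ≤ 4*C*((m:ℝ)+1)^(δ/2) := by
    have h := cs_estimate hδ1 hδ2' hC.le hV'c hV'b m (n+1)
    rw [← hI4] at h
    exact h
  -- coefficient bounds
  have hac : ∀ k : ℕ, k ≤ n+1 → ac k ≤ ((n:ℝ)+1)^((1:ℝ)/2) := by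
    intro k hk
    rw [show ((n:ℝ)+1)^((1:ℝ)/2) = Real.sqrt ((n:ℝ)+1) from (Real.sqrt_eq_rpow _).symm]
    apply Real.sqrt_le_sqrt
    have : (k:ℝ) ≤ (n:ℝ)+1 := by exact_mod_cast hk
    linarith
  have hsq : (0:ℝ) ≤ ((n:ℝ)+1)^((1:ℝ)/2) := by positivity
  have hmd : (0:ℝ) ≤ ((m:ℝ)+1)^(δ/2) := by positivity
  have hterm : ∀ (k : ℕ) (I B : ℝ), k ≤ n+1 → |I| ≤ B → 0 ≤ B →
      ac k * |I| ≤ ((n:ℝ)+1)^((1:ℝ)/2) * B := by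
    intro k I B hk hI hB
    exact mul_le_mul (hac k hk) hI (abs_nonneg _) hsq
  have htri : |ac m * I1 - ac (m+1) * I2 - (ac n * I3 - ac (n+1) * I4)|
      ≤ ac m * |I1| + ac (m+1) * |I2| + (ac n * |I3| + ac (n+1) * |I4|) := by
    calc |ac m * I1 - ac (m+1) * I2 - (ac n * I3 - ac (n+1) * I4)|
        ≤ |ac m * I1 - ac (m+1) * I2| + |ac n * I3 - ac (n+1) * I4| := abs_sub _ _
      _ ≤ (|ac m * I1| + |ac (m+1) * I2|) + (|ac n * I3| + |ac (n+1) * I4|) :=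
          add_le_add (abs_sub _ _) (abs_sub _ _)
      _ = ac m * |I1| + ac (m+1) * |I2| + (ac n * |I3| + ac (n+1) * |I4|) := by
          rw [abs_mul, abs_mul, abs_mul, abs_mul,
            abs_of_nonneg (ac_nonneg m), abs_of_nonneg (ac_nonneg (m+1)),
            abs_of_nonneg (ac_nonneg n), abs_of_nonneg (ac_nonneg (n+1))]
  have hRHS : |∫ x, deriv V x * (Dη m x * η n x - η m x * Dη n x)|
      ≤ ((n:ℝ)+1)^((1:ℝ)/2) * (40*C*((m:ℝ)+1)^(δ/2)) := by
    rw [hsplit]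
    have t1 := hterm m I1 _ (by omega) hb1 (by positivity)
    have t2 := hterm (m+1) I2 _ (by omega) hb2 (by positivity)
    have t3 := hterm n I3 _ (by omega) hb3 (by positivity)
    have t4 := hterm (n+1) I4 _ (by omega) hb4 (by positivity)
    have := htri.trans (by linarith : ac m * |I1| + ac (m+1) * |I2| + (ac n * |I3| + ac (n+1) * |I4|)
      ≤ ((n:ℝ)+1)^((1:ℝ)/2) * (4*C*((m:ℝ)+1)^(δ/2)) + ((n:ℝ)+1)^((1:ℝ)/2) * (8*C*((m:ℝ)+1)^(δ/2))
        + (((n:ℝ)+1)^((1:ℝ)/2) * (4*C*((m:ℝ)+1)^(δ/2)) + ((n:ℝ)+1)^((1:ℝ)/2) * (4*C*((m:ℝ)+1)^(δ/2))))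
    refine this.trans ?_
    have h9 : 0 ≤ ((n:ℝ)+1)^((1:ℝ)/2) * (C * ((m:ℝ)+1)^(δ/2)) :=
      mul_nonneg hsq (mul_nonneg hC.le hmd)
    nlinarith [h9]
  have hLHS : |(m:ℝ) - (n:ℝ)| * |∫ x, V x * (η m x * η n x)|
      = (1/2) * |2*((m:ℝ)-(n:ℝ)) * ∫ x, V x * (η m x * η n x)| := by
    rw [abs_mul, abs_mul, abs_two]
    ring
  rw [hLHS, hcomm]
  calc (1/2) * |∫ x, deriv V x * (Dη m x * η n x - η m x * Dη n x)|
      ≤ (1/2) * (((n:ℝ)+1)^((1:ℝ)/2) * (40*C*((m:ℝ)+1)^(δ/2))) := by linarith [hRHS]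
    _ = 20*C * ((n:ℝ)+1)^((1:ℝ)/2) * ((m:ℝ)+1)^(δ/2) := by ring

end Stmt16

/-- Off-diagonal decay of the potential matrix: if `V` is `C¹` with `|V| ≤ C` and
`|V'(x)| ≤ C(1+|x|)^δ`, `δ ∈ (0,1)`, then the Hermite-basis matrix
`P_i^j = ∫ V h_i h_j dx` satisfies
`|i-j|·|P_i^j| ≤ C'·max(i,j)^{1/2}·min(i,j)^{δ/2}`. -/
theorem stmt16 (δ C : ℝ) (hδ : δ ∈ Set.Ioo (0:ℝ) 1) (hC : 0 < C)
    (V : ℝ → ℝ) (hV : ContDiff ℝ 1 V)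
    (hVb : ∀ x, |V x| ≤ C) (hV'b : ∀ x, |deriv V x| ≤ C * (1+|x|) ^ δ) :
    ∃ C' : ℝ, 0 < C' ∧ ∀ i j : ℕ+,
      |(i:ℝ) - (j:ℝ)| * |∫ x, V x * hermiteFun (i:ℕ) x * hermiteFun (j:ℕ) x|
        ≤ C' * ((max i j : ℕ+):ℝ) ^ ((1:ℝ)/2) * ((min i j : ℕ+):ℝ) ^ (δ/2) := by
  refine ⟨20*C, by positivity, ?_⟩
  have key : ∀ i j : ℕ+, i ≤ j →
      |(i:ℝ) - (j:ℝ)| * |∫ x, V x * hermiteFun (i:ℕ) x * hermiteFun (j:ℕ) x|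
        ≤ 20*C * ((j:ℕ):ℝ) ^ ((1:ℝ)/2) * ((i:ℕ):ℝ) ^ (δ/2) := by
    intro i j hij
    set m : ℕ := (i:ℕ) - 1 with hm
    set n : ℕ := (j:ℕ) - 1 with hn
    have him : (i:ℕ) = m + 1 := by
      have := i.pos; omega
    have hjn : (j:ℕ) = n + 1 := by
      have := j.pos; omega
    have hmn : m ≤ n := by
      have : (i:ℕ) ≤ (j:ℕ) := hij
      omega
    have hint_eq : (fun x => V x * hermiteFun (i:ℕ) x * hermiteFun (j:ℕ) x)
        = fun x => V x * (Stmt16.η m x * Stmt16.η n x) := by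
      funext x
      rw [him, hjn, Stmt16.hermiteFun_eq m, Stmt16.hermiteFun_eq n]
      ring
    have hmain := Stmt16.main_est hδ hC hV hVb hV'b hmn
    have e_i : ((i:ℕ):ℝ) = (m:ℝ)+1 := by rw [him]; push_cast; ring
    have e_j : ((j:ℕ):ℝ) = (n:ℝ)+1 := by rw [hjn]; push_cast; ring
    rw [hint_eq, e_i, e_j, show ((m:ℝ)+1) - ((n:ℝ)+1) = (m:ℝ) - (n:ℝ) by ring]
    exact hmain
  intro i j
  rcases le_total i j with h | h
  · have hmax : max i j = j := max_eq_right h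
    have hmin : min i j = i := min_eq_left h
    rw [hmax, hmin]
    exact key i j h
  · have hmax : max i j = i := max_eq_left h
    have hmin : min i j = j := min_eq_right h
    rw [hmax, hmin]
    have hk := key j i h
    have e1 : |(i:ℝ) - (j:ℝ)| = |(j:ℝ) - (i:ℝ)| := abs_sub_comm _ _
    have e2 : (fun x => V x * hermiteFun (i:ℕ) x * hermiteFun (j:ℕ) x)
        = fun x => V x * hermiteFun (j:ℕ) x * hermiteFun (i:ℕ) x := by
      funext x; ring
    rw [e1, e2]
    exact hk
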